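/- (Time-averaging formula.) Let C_s : M_d(ℂ) → M_d(ℂ) denote the conjugation C_s(ρ) = e^{isH} ρ e^{−isH}. Then for every linear map X : M_d(ℂ) → M_d(ℂ), the time averages (1/(2t)) ∫_{−t}^{t} C_{−s} ∘ X ∘ C_s ds converge in operator norm, as t → ∞, to X^♯ := Σ_ω E_ω ∘ X ∘ E_ω, where the sum runs over all Bohr frequencies of H. -/

import Mathlib

open Matrix Filter

noncomputable section

attribute [local instance] Matrix.normedAddCommGroup Matrix.normedSpace

/-- The rank-one orthogonal projection `P_k = |φ_k⟩⟨φ_k|` onto the `k`-th basis vector. -/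
def eigProj {d : ℕ} (v : Fin d → Fin d → ℂ) (k : Fin d) : Matrix (Fin d) (Fin d) ℂ :=
  Matrix.vecMulVec (v k) (star (v k))

/-- The Hamiltonian `H = Σ_k ε_k P_k`. -/
def hamOf {d : ℕ} (ε : Fin d → ℝ) (v : Fin d → Fin d → ℂ) : Matrix (Fin d) (Fin d) ℂ :=
  ∑ k, (ε k : ℂ) • eigProj v k

/-- The (finite) set of Bohr frequencies `{ε_k − ε_l}` of `H`. -/
def bohrSet {d : ℕ} (ε : Fin d → ℝ) : Finset ℝ :=
  Finset.image (fun p : Fin d × Fin d => ε p.1 - ε p.2) Finset.univ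

/-- The map `E_ω(ρ) = Σ_{(k,l): ε_k−ε_l=ω} P_k ρ P_l` as a continuous linear map. -/
def bohrProjL {d : ℕ} (ε : Fin d → ℝ) (v : Fin d → Fin d → ℂ) (ω : ℝ) :
    Matrix (Fin d) (Fin d) ℂ →L[ℂ] Matrix (Fin d) (Fin d) ℂ :=
  LinearMap.toContinuousLinearMap <|
    ∑ k, ∑ l, (if ε k - ε l = ω then (1:ℂ) else 0) •
      ((LinearMap.mulLeft ℂ (eigProj v k)).comp (LinearMap.mulRight ℂ (eigProj v l)))

/-- The conjugation `C_s(ρ) = e^{isH} ρ e^{−isH}` as a continuous linear map. -/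
def conjCLM {d : ℕ} (H : Matrix (Fin d) (Fin d) ℂ) (s : ℝ) :
    Matrix (Fin d) (Fin d) ℂ →L[ℂ] Matrix (Fin d) (Fin d) ℂ :=
  LinearMap.toContinuousLinearMap <|
    (LinearMap.mulLeft ℂ (NormedSpace.exp ((Complex.I * s) • H))).comp
      (LinearMap.mulRight ℂ (NormedSpace.exp ((-(Complex.I * s)) • H)))

/-- Port helper: the standard operator-norm normed group structure on `M_d(ℂ) →L[ℂ] M_d(ℂ)`; the
current instance search no longer unifies the matrix topology with the one from the local norm. -/
instance matCLMNormedAddCommGroup {d : ℕ} :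
    NormedAddCommGroup (Matrix (Fin d) (Fin d) ℂ →L[ℂ] Matrix (Fin d) (Fin d) ℂ) :=
  ContinuousLinearMap.toNormedAddCommGroup

/-- Port helper: the standard real normed-space structure (pointwise scalar action), as above. -/
instance matCLMNormedSpaceReal {d : ℕ} :
    NormedSpace ℝ (Matrix (Fin d) (Fin d) ℂ →L[ℂ] Matrix (Fin d) (Fin d) ℂ) :=
  ContinuousLinearMap.toNormedSpace

def Wmat {d : ℕ} (v : Fin d → Fin d → ℂ) : Matrix (Fin d) (Fin d) ℂ :=
  Matrix.of fun i k => v k i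

lemma W_conj_sum {d : ℕ} (v : Fin d → Fin d → ℂ) (f : Fin d → ℂ) :
    Wmat v * Matrix.diagonal f * (Wmat v)ᴴ = ∑ k, f k • eigProj v k := by
  ext i j
  simp only [Matrix.mul_apply, Matrix.mul_diagonal, Matrix.conjTranspose_apply, Wmat,
    Matrix.of_apply, Finset.sum_apply, Matrix.sum_apply, Matrix.smul_apply, eigProj,
    Matrix.vecMulVec_apply, Pi.star_apply, smul_eq_mul, Matrix.diagonal_apply]
  apply Finset.sum_congr rfl
  intro k _
  simp [Finset.mul_sum, Finset.sum_ite_eq', RingHom.id_apply]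
  ring

lemma WH_mul_W {d : ℕ} (v : Fin d → Fin d → ℂ)
    (hv : ∀ k l, star (v k) ⬝ᵥ v l = if k = l then (1:ℂ) else 0) :
    (Wmat v)ᴴ * Wmat v = 1 := by
  ext k l
  have := hv k l
  simpa [Matrix.mul_apply, Matrix.conjTranspose_apply, Wmat, Matrix.one_apply,
    dotProduct, mul_comm] using this

lemma exp_smul_ham {d : ℕ} (ε : Fin d → ℝ) (v : Fin d → Fin d → ℂ)
    (hv : ∀ k l, star (v k) ⬝ᵥ v l = if k = l then (1:ℂ) else 0) (c : ℂ) :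
    NormedSpace.exp (c • hamOf ε v) = ∑ k, Complex.exp (c * ε k) • eigProj v k := by
  have hWHW := WH_mul_W v hv
  have hWWH : Wmat v * (Wmat v)ᴴ = 1 := mul_eq_one_comm.mpr hWHW
  set U : (Matrix (Fin d) (Fin d) ℂ)ˣ := ⟨Wmat v, (Wmat v)ᴴ, hWWH, hWHW⟩ with hU
  have h1 : c • hamOf ε v = Wmat v * Matrix.diagonal (fun k => c * ε k) * (Wmat v)ᴴ := by
    rw [W_conj_sum, hamOf, Finset.smul_sum]
    apply Finset.sum_congr rfl
    intro k _
    rw [smul_smul]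
  have h2 := Matrix.exp_units_conj U (Matrix.diagonal (fun k => c * ε k))
  have hUinv : (↑U⁻¹ : Matrix (Fin d) (Fin d) ℂ) = (Wmat v)ᴴ := rfl
  rw [hUinv] at h2
  have hUc : (↑U : Matrix (Fin d) (Fin d) ℂ) = Wmat v := rfl
  rw [hUc] at h2
  rw [h1, h2, Matrix.exp_diagonal]
  have h3 : (NormedSpace.exp fun k => c * (ε k : ℂ)) = fun k => Complex.exp (c * ε k) := by
    funext k; rw [Pi.coe_exp, Complex.exp_eq_exp_ℂ]
  rw [h3]
  exact W_conj_sum v _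

def pkl {d : ℕ} (v : Fin d → Fin d → ℂ) (k l : Fin d) :
    Matrix (Fin d) (Fin d) ℂ →L[ℂ] Matrix (Fin d) (Fin d) ℂ :=
  LinearMap.toContinuousLinearMap <|
    (LinearMap.mulLeft ℂ (eigProj v k)).comp (LinearMap.mulRight ℂ (eigProj v l))

lemma pkl_apply {d : ℕ} (v : Fin d → Fin d → ℂ) (k l : Fin d) (ρ : Matrix (Fin d) (Fin d) ℂ) :
    pkl v k l ρ = eigProj v k * (ρ * eigProj v l) := rfl

lemma conjCLM_apply {d : ℕ} (H : Matrix (Fin d) (Fin d) ℂ) (s : ℝ) (ρ : Matrix (Fin d) (Fin d) ℂ) :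
    conjCLM H s ρ = NormedSpace.exp ((Complex.I * s) • H) *
      (ρ * NormedSpace.exp ((-(Complex.I * s)) • H)) := rfl

lemma conjCLM_eq {d : ℕ} (ε : Fin d → ℝ) (v : Fin d → Fin d → ℂ)
    (hv : ∀ k l, star (v k) ⬝ᵥ v l = if k = l then (1:ℂ) else 0) (s : ℝ) :
    conjCLM (hamOf ε v) s =
      ∑ p : Fin d × Fin d, Complex.exp (Complex.I * s * (ε p.1 - ε p.2)) • pkl v p.1 p.2 := by
  ext ρ : 1
  rw [conjCLM_apply, exp_smul_ham ε v hv, exp_smul_ham ε v hv]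
  simp only [ContinuousLinearMap.sum_apply, ContinuousLinearMap.smul_apply, pkl_apply,
    Finset.mul_sum, Finset.sum_mul, smul_mul_assoc, mul_smul_comm, smul_smul, Finset.smul_sum,
    Fintype.sum_prod_type]
  rw [Finset.sum_comm]
  simp [mul_comm]
  apply Finset.sum_congr rfl; intro k _
  apply Finset.sum_congr rfl; intro l _
  congr 1
  rw [← Complex.exp_add]
  congr 1
  push_cast
  ring

lemma coef_tendsto (θ : ℝ) :
    Tendsto (fun t : ℝ => (1 / (2 * t)) • ∫ s in (-t)..t, Complex.exp (Complex.I * s * θ))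
      atTop (nhds (if θ = 0 then (1:ℂ) else 0)) := by
  by_cases hθ : θ = 0
  · rw [if_pos hθ]
    apply Tendsto.congr' _ tendsto_const_nhds
    filter_upwards [eventually_ge_atTop (1:ℝ)] with t ht
    have ht' : (2 : ℝ) * t ≠ 0 := by positivity
    simp only [hθ, Complex.ofReal_zero, mul_zero, Complex.exp_zero]
    rw [intervalIntegral.integral_const, smul_smul]
    have : t - -t = 2 * t := by ring
    rw [this, one_div, inv_mul_cancel₀ ht', one_smul]
  · rw [if_neg hθ]
    have hc : (Complex.I * θ) ≠ 0 := by
      simp [Complex.I_ne_zero, Complex.ofReal_eq_zero, hθ]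
    have habs : 0 < ‖Complex.I * θ‖ := norm_pos_iff.mpr hc
    apply squeeze_zero_norm' (a := fun t : ℝ => (1 / (2 * t)) * (2 / ‖Complex.I * θ‖))
    · filter_upwards [eventually_gt_atTop (0:ℝ)] with t ht
      have hint : (∫ s in (-t)..t, Complex.exp (Complex.I * s * θ)) =
          (Complex.exp ((Complex.I * θ) * t) - Complex.exp ((Complex.I * θ) * ((-t : ℝ) : ℂ))) /
            (Complex.I * θ) := by
        rw [show (∫ s in (-t)..t, Complex.exp (Complex.I * s * θ)) =
            ∫ s in (-t)..t, Complex.exp ((Complex.I * θ) * s) from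
          intervalIntegral.integral_congr fun s _ => by ring_nf]
        exact integral_exp_mul_complex hc
      rw [hint, norm_smul]
      have h1 : ∀ u : ℝ, ‖Complex.exp ((Complex.I * θ) * u)‖ = 1 := by
        intro u
        rw [Complex.norm_exp]
        have : ((Complex.I * θ) * u).re = 0 := by simp [Complex.mul_re]
        rw [this, Real.exp_zero]
      have hnum : ‖Complex.exp ((Complex.I * θ) * t) -
          Complex.exp ((Complex.I * θ) * ((-t : ℝ) : ℂ))‖ ≤ 2 := by
        calc ‖_‖ ≤ ‖Complex.exp ((Complex.I * θ) * t)‖ +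
              ‖Complex.exp ((Complex.I * θ) * ((-t : ℝ) : ℂ))‖ :=
              norm_sub_le _ _
          _ = 2 := by rw [h1 t, h1 (-t)]; norm_num
      have hq : ‖(Complex.exp ((Complex.I * θ) * t) - Complex.exp ((Complex.I * θ) * ((-t : ℝ) : ℂ))) /
          (Complex.I * θ)‖ ≤ 2 / ‖Complex.I * θ‖ := by
        rw [norm_div]
        exact (div_le_div_iff_of_pos_right habs).mpr hnum
      calc ‖(1 / (2 * t) : ℝ)‖ * ‖_‖ ≤ (1 / (2*t)) * (2 / ‖Complex.I * θ‖) := by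
            apply mul_le_mul _ hq (norm_nonneg _) (by positivity)
            rw [Real.norm_eq_abs, abs_of_pos (by positivity)]
        _ = _ := rfl
    · have h2t : Tendsto (fun t : ℝ => 2 * t) atTop atTop :=
        (tendsto_id (α := ℝ)).const_mul_atTop two_pos
      have hz : Tendsto (fun t : ℝ => (2 * t)⁻¹) atTop (nhds 0) :=
        tendsto_inv_atTop_zero.comp h2t
      simpa [one_div] using hz.mul_const (2 / ‖Complex.I * θ‖)

section helper

variable {d : ℕ}

abbrev MatC (d : ℕ) := Matrix (Fin d) (Fin d) ℂ

lemma comp_sum_smul {ι κ : Type*} [Fintype ι] [Fintype κ]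
    (c : ι → ℂ) (e : κ → ℂ) (A : ι → (MatC d →L[ℂ] MatC d)) (B : κ → (MatC d →L[ℂ] MatC d))
    (T : MatC d →L[ℂ] MatC d) :
    (∑ i, c i • A i).comp (T.comp (∑ j, e j • B j)) =
      ∑ p : ι × κ, (c p.1 * e p.2) • ((A p.1).comp (T.comp (B p.2))) := by
  ext ρ : 1
  simp only [ContinuousLinearMap.comp_apply, ContinuousLinearMap.sum_apply,
    ContinuousLinearMap.smul_apply, map_sum, _root_.map_smul, Finset.smul_sum, smul_smul,
    Fintype.sum_prod_type]
  rw [Finset.sum_comm]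
  simp [mul_comm]

lemma integrand_eq (ε : Fin d → ℝ) (v : Fin d → Fin d → ℂ)
    (hv : ∀ k l, star (v k) ⬝ᵥ v l = if k = l then (1:ℂ) else 0)
    (X : MatC d →L[ℂ] MatC d) (s : ℝ) :
    (conjCLM (hamOf ε v) (-s)).comp (X.comp (conjCLM (hamOf ε v) s)) =
      ∑ p : (Fin d × Fin d) × (Fin d × Fin d),
        Complex.exp (Complex.I * s * ((((ε p.2.1 - ε p.2.2) - (ε p.1.1 - ε p.1.2)) : ℝ) : ℂ)) •
          ((pkl v p.1.1 p.1.2).comp (X.comp (pkl v p.2.1 p.2.2))) := by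
  rw [conjCLM_eq ε v hv, conjCLM_eq ε v hv, comp_sum_smul]
  apply Finset.sum_congr rfl
  intro p _
  congr 1
  rw [← Complex.exp_add]
  congr 1
  push_cast
  ring

end helper

lemma bohrProjL_eq {d : ℕ} (ε : Fin d → ℝ) (v : Fin d → Fin d → ℂ) (ω : ℝ) :
    bohrProjL ε v ω = ∑ p : Fin d × Fin d,
      (if ε p.1 - ε p.2 = ω then (1:ℂ) else 0) • pkl v p.1 p.2 := by
  ext ρ : 1
  simp only [bohrProjL, pkl, LinearMap.coe_toContinuousLinearMap',
    ContinuousLinearMap.sum_apply, ContinuousLinearMap.smul_apply, LinearMap.sum_apply,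
    LinearMap.smul_apply, LinearMap.coe_comp, Function.comp_apply, LinearMap.mulLeft_apply,
    LinearMap.mulRight_apply, Fintype.sum_prod_type]

lemma rhs_eq {d : ℕ} (ε : Fin d → ℝ) (v : Fin d → Fin d → ℂ)
    (X : MatC d →L[ℂ] MatC d) :
    ∑ ω ∈ bohrSet ε, (bohrProjL ε v ω).comp (X.comp (bohrProjL ε v ω)) =
      ∑ p : (Fin d × Fin d) × (Fin d × Fin d),
        (if ((ε p.2.1 - ε p.2.2) - (ε p.1.1 - ε p.1.2)) = (0:ℝ) then (1:ℂ) else 0) •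
          ((pkl v p.1.1 p.1.2).comp (X.comp (pkl v p.2.1 p.2.2))) := by
  have h1 : ∀ ω, (bohrProjL ε v ω).comp (X.comp (bohrProjL ε v ω)) =
      ∑ p : (Fin d × Fin d) × (Fin d × Fin d),
        ((if ε p.1.1 - ε p.1.2 = ω then (1:ℂ) else 0) *
         (if ε p.2.1 - ε p.2.2 = ω then (1:ℂ) else 0)) •
          ((pkl v p.1.1 p.1.2).comp (X.comp (pkl v p.2.1 p.2.2))) := by
    intro ω
    rw [bohrProjL_eq, comp_sum_smul]
  simp only [h1]
  rw [Finset.sum_comm]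
  apply Finset.sum_congr rfl
  intro p _
  rw [← Finset.sum_smul]
  congr 1
  have hmem : ε p.1.1 - ε p.1.2 ∈ bohrSet ε :=
    Finset.mem_image.mpr ⟨(p.1.1, p.1.2), Finset.mem_univ _, rfl⟩
  calc ∑ ω ∈ bohrSet ε, (if ε p.1.1 - ε p.1.2 = ω then (1:ℂ) else 0) *
        (if ε p.2.1 - ε p.2.2 = ω then (1:ℂ) else 0)
      = ∑ ω ∈ bohrSet ε, (if ω = ε p.1.1 - ε p.1.2 then
          (if ε p.2.1 - ε p.2.2 = ε p.1.1 - ε p.1.2 then (1:ℂ) else 0) else 0) := by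
        apply Finset.sum_congr rfl
        intro ω _
        by_cases h1 : ε p.1.1 - ε p.1.2 = ω
        · subst h1; simp
        · rw [if_neg h1, zero_mul, if_neg (fun h => h1 h.symm)]
    _ = (if ε p.2.1 - ε p.2.2 = ε p.1.1 - ε p.1.2 then (1:ℂ) else 0) := by
        rw [Finset.sum_ite_eq' (bohrSet ε), if_pos hmem]
    _ = _ := by simp [sub_eq_zero]


lemma avg_sum_aux {ι E : Type*} [Fintype ι] [NormedAddCommGroup E] [hR : NormedSpace ℝ E]
    [hC : NormedSpace ℂ E] [hT : IsScalarTower ℝ ℂ E] [hCS : CompleteSpace E] (θ : ι → ℝ) (G : ι → E) (t : ℝ) :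
    (1 / (2 * t)) • (∫ s in (-t)..t, ∑ p, Complex.exp (Complex.I * s * θ p) • G p) =
      ∑ p, ((1 / (2 * t)) • ∫ s in (-t)..t, Complex.exp (Complex.I * s * θ p)) • G p := by
  rw [intervalIntegral.integral_finset_sum]
  · rw [Finset.smul_sum]
    apply Finset.sum_congr rfl
    intro p _
    rw [intervalIntegral.integral_smul_const, ← smul_assoc]
  · intro p _
    apply Continuous.intervalIntegrable
    exact (Complex.continuous_exp.comp (by continuity)).smul continuous_const

/-- time-averaging formula: the averages
`(1/(2t)) ∫_{−t}^t C_{−s} ∘ X ∘ C_s ds` converge in operator norm, as `t → ∞`, to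
`X^♯ = Σ_ω E_ω ∘ X ∘ E_ω`. -/
theorem stmt7 {d : ℕ} (ε : Fin d → ℝ) (v : Fin d → Fin d → ℂ)
    (hv : ∀ k l, star (v k) ⬝ᵥ v l = if k = l then (1:ℂ) else 0)
    (H : Matrix (Fin d) (Fin d) ℂ) (hH : H = hamOf ε v)
    (X : Matrix (Fin d) (Fin d) ℂ →L[ℂ] Matrix (Fin d) (Fin d) ℂ) :
    Tendsto
      (fun t : ℝ => (1 / (2 * t)) •
        ∫ s in (-t)..t, (conjCLM H (-s)).comp (X.comp (conjCLM H s)))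
      atTop
      (nhds (∑ ω ∈ bohrSet ε, (bohrProjL ε v ω).comp (X.comp (bohrProjL ε v ω)))) := by
  subst hH
  set θf : ((Fin d × Fin d) × (Fin d × Fin d)) → ℝ :=
    fun p => (ε p.2.1 - ε p.2.2) - (ε p.1.1 - ε p.1.2) with hθf
  set G : ((Fin d × Fin d) × (Fin d × Fin d)) → (MatC d →L[ℂ] MatC d) :=
    fun p => (pkl v p.1.1 p.1.2).comp (X.comp (pkl v p.2.1 p.2.2)) with hG
  have hfun : ∀ t : ℝ, (1 / (2 * t)) •
      (∫ s in (-t)..t, (conjCLM (hamOf ε v) (-s)).comp (X.comp (conjCLM (hamOf ε v) s))) =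
      ∑ p, ((1 / (2 * t)) • ∫ s in (-t)..t, Complex.exp (Complex.I * s * θf p)) • G p := by
    intro t
    rw [intervalIntegral.integral_congr
      (g := fun s => ∑ p, Complex.exp (Complex.I * s * θf p) • G p)
      (fun s _ => integrand_eq ε v hv X s)]
    have hT : IsScalarTower ℝ ℂ (MatC d →L[ℂ] MatC d) := ⟨fun r c x => smul_assoc r c x⟩
    have hCS : CompleteSpace (MatC d →L[ℂ] MatC d) := FiniteDimensional.complete ℂ _
    exact avg_sum_aux (E := MatC d →L[ℂ] MatC d) (hC := ContinuousLinearMap.toNormedSpace) (hT := hT) (hCS := hCS) θf G t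
  have hlim : Tendsto (fun t : ℝ =>
      ∑ p, ((1 / (2 * t)) • ∫ s in (-t)..t, Complex.exp (Complex.I * s * θf p)) • G p)
      atTop (nhds (∑ p, (if θf p = 0 then (1:ℂ) else 0) • G p)) := by
    apply tendsto_finset_sum
    intro p _
    exact (coef_tendsto (θf p)).smul_const (G p)
  rw [rhs_eq ε v X]
  exact hlim.congr (fun t => (hfun t).symm)
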